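/- Let X be a set, Y a nonempty subset of X, and S(Y) a subsemigroup of T(Y). Then T_{S(Y)}(X) is a regular semigroup if and only if either (i) S(Y) is a subgroup of Sym(Y), or (ii) S(Y) is regular and Y = X. -/
import Mathlib


open Set Function

/-- `S` is a subsemigroup of the full transformation semigroup on `A`
(closed under composition; composition order is irrelevant here since we
quantify over all ordered pairs). -/
def IsSubsemigroupOn {A : Type*} (S : Set (A → A)) : Prop :=
  ∀ a ∈ S, ∀ b ∈ S, a ∘ b ∈ S

/-- `S` is a subgroup of `Sym(A)`. -/
def IsSubgroupOfSym {A : Type*} (S : Set (A → A)) : Prop :=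
  IsSubsemigroupOn S ∧ (∀ a ∈ S, Function.Bijective a) ∧ (id ∈ S) ∧
    ∀ a ∈ S, ∃ b ∈ S, a ∘ b = id ∧ b ∘ a = id

/-- `S` is a regular semigroup of transformations: every `a ∈ S` has `b ∈ S`
with `aba = a` (composed left to right, i.e. `x ↦ a (b (a x))`). -/
def IsRegularOn {A : Type*} (S : Set (A → A)) : Prop :=
  ∀ a ∈ S, ∃ b ∈ S, a ∘ b ∘ a = a

/-- `S` is an inverse semigroup of transformations. -/
def IsInverseOn {A : Type*} (S : Set (A → A)) : Prop :=
  ∀ a ∈ S, ∃! b, b ∈ S ∧ a ∘ b ∘ a = a ∧ b ∘ a ∘ b = b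

/-- `u` is a unit of the transformation monoid `S`. -/
def IsUnitOn {A : Type*} (S : Set (A → A)) (u : A → A) : Prop :=
  u ∈ S ∧ ∃ v ∈ S, u ∘ v = id ∧ v ∘ u = id

/-- `a` is a unit-regular element of `S`. -/
def UnitRegularElem {A : Type*} (S : Set (A → A)) (a : A → A) : Prop :=
  ∃ u, IsUnitOn S u ∧ a ∘ u ∘ a = a

/-- `S` is a unit-regular transformation monoid. -/
def IsUnitRegularOn {A : Type*} (S : Set (A → A)) : Prop :=
  ∀ a ∈ S, UnitRegularElem S a

/-- `T` is a transversal of `ker f`: it contains exactly one element of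
each kernel class. -/
def IsTransversalOf {A : Type*} (f : A → A) (T : Set A) : Prop :=
  ∀ x : A, ∃! t, t ∈ T ∧ f t = f x

/-- `T'` is a transversal of the kernel of the restriction of `f` to `Y`,
viewed inside the ambient set. -/
def IsTransversalOfOn {A : Type*} (f : A → A) (Y T' : Set A) : Prop :=
  T' ⊆ Y ∧ ∀ y ∈ Y, ∃! t, t ∈ T' ∧ f t = f y

/-- The semigroup `T_{S(Y)}(X)` of all transformations of `X` that leave `Y`
invariant and whose restriction-corestriction to `Y` lies in `S`. -/
def TSemi {X : Type*} (Y : Set X) (S : Set (Y → Y)) : Set (X → X) :=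
  {f | ∃ h : MapsTo f Y Y, MapsTo.restrict f Y Y h ∈ S}


section Aux

variable {X : Type*} {Y : Set X} {S : Set (Y → Y)}

open Classical in
/-- Lift `a : Y → Y` to a map on `X`, sending everything outside `Y` to `a y0`. -/
noncomputable def liftY (Y : Set X) (y0 : Y) (a : Y → Y) : X → X :=
  fun x => if h : x ∈ Y then (a ⟨x, h⟩ : X) else (a y0 : X)

lemma liftY_mapsTo (y0 : Y) (a : Y → Y) : MapsTo (liftY Y y0 a) Y Y := by
  intro x hx
  simp only [liftY, dif_pos hx]
  exact (a ⟨x, hx⟩).2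

lemma liftY_restrict (y0 : Y) (a : Y → Y) :
    MapsTo.restrict (liftY Y y0 a) Y Y (liftY_mapsTo y0 a) = a := by
  funext y
  apply Subtype.ext
  show liftY Y y0 a y = (a y : X)
  simp only [liftY, dif_pos y.2, Subtype.coe_eta]

lemma restrict_sandwich {f g : X → X} (hf : MapsTo f Y Y) (hg : MapsTo g Y Y)
    (hfgf : f ∘ g ∘ f = f) (y : Y) :
    MapsTo.restrict f Y Y hf (MapsTo.restrict g Y Y hg (MapsTo.restrict f Y Y hf y)) =
      MapsTo.restrict f Y Y hf y :=
  Subtype.ext (congrFun hfgf (y : X))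

/-- Regularity of `TSemi` always implies regularity of `S`. -/
lemma regular_of_tsemi (hY : Y.Nonempty) (hreg : IsRegularOn (TSemi Y S)) :
    IsRegularOn S := by
  obtain ⟨y0, hy0⟩ := hY
  intro a ha
  have hfS : liftY Y ⟨y0, hy0⟩ a ∈ TSemi Y S :=
    ⟨liftY_mapsTo _ a, by rw [liftY_restrict]; exact ha⟩
  obtain ⟨g, ⟨hgMap, hgS⟩, hfgf⟩ := hreg _ hfS
  refine ⟨MapsTo.restrict g Y Y hgMap, hgS, ?_⟩
  funext y
  have := restrict_sandwich (liftY_mapsTo ⟨y0, hy0⟩ a) hgMap hfgf y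
  rwa [liftY_restrict] at this

end Aux

theorem stmt2 {X : Type*} (Y : Set X) (S : Set (Y → Y)) (hY : Y.Nonempty)
    (hSne : S.Nonempty) (hS : IsSubsemigroupOn S) :
    IsRegularOn (TSemi Y S) ↔
      (IsSubgroupOfSym S ∨ (IsRegularOn S ∧ Y = Set.univ)) := by

  classical
  obtain ⟨y0, hy0⟩ := hY
  constructor
  · intro hreg
    by_cases hYu : Y = Set.univ
    · exact Or.inr ⟨regular_of_tsemi ⟨y0, hy0⟩ hreg, hYu⟩
    · -- there is a point outside Y
      obtain ⟨p, hp⟩ : ∃ p, p ∉ Y := by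
        by_contra h
        push_neg at h
        exact hYu (Set.eq_univ_of_forall h)
      left
      -- every element of S is surjective
      have hsurj : ∀ a ∈ S, Function.Surjective a := by
        intro a ha
        by_contra hns
        rw [Function.Surjective] at hns
        push_neg at hns
        obtain ⟨z, hz⟩ := hns
        set f : X → X := fun x => if h : x ∈ Y then (a ⟨x, h⟩ : X) else (z : X) with hfdef
        have hMap : MapsTo f Y Y := by
          intro x hx
          simp only [f, dif_pos hx]
          exact (a ⟨x, hx⟩).2
        have hres : MapsTo.restrict f Y Y hMap = a := by
          funext y
          apply Subtype.ext
          show f y = (a y : X)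
          simp only [f, dif_pos y.2, Subtype.coe_eta]
        obtain ⟨g, ⟨hgMap, hgS⟩, hfgf⟩ := hreg f ⟨hMap, by rw [hres]; exact ha⟩
        have h1 : f (g (f p)) = f p := congrFun hfgf p
        have hfp : f p = (z : X) := by simp only [f, dif_neg hp]
        rw [hfp] at h1
        have hgz : g (z : X) ∈ Y := hgMap z.2
        have h2 : f (g (z : X)) = (a ⟨g (z : X), hgz⟩ : X) := by
          simp only [f, dif_pos hgz]
        rw [h2] at h1
        exact hz _ (Subtype.coe_injective h1)
      -- every element of S has a right inverse in S
      have hrinv : ∀ a ∈ S, ∃ b ∈ S, a ∘ b = id := by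
        intro a ha
        have hfS : liftY Y ⟨y0, hy0⟩ a ∈ TSemi Y S :=
          ⟨liftY_mapsTo _ a, by rw [liftY_restrict]; exact ha⟩
        obtain ⟨g, ⟨hgMap, hgS⟩, hfgf⟩ := hreg _ hfS
        refine ⟨MapsTo.restrict g Y Y hgMap, hgS, ?_⟩
        funext z
        obtain ⟨y, rfl⟩ := hsurj a ha z
        have := restrict_sandwich (liftY_mapsTo ⟨y0, hy0⟩ a) hgMap hfgf y
        rwa [liftY_restrict] at this
      -- every element of S has a two-sided inverse in S
      have htwo : ∀ a ∈ S, ∃ b ∈ S, a ∘ b = id ∧ b ∘ a = id := by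
        intro a ha
        obtain ⟨b, hb, hab⟩ := hrinv a ha
        obtain ⟨c, hc, hbc⟩ := hrinv b hb
        have hca : c = a := by
          calc c = id ∘ c := rfl
            _ = (a ∘ b) ∘ c := by rw [hab]
            _ = a ∘ (b ∘ c) := rfl
            _ = a := by rw [hbc, Function.comp_id]
        exact ⟨b, hb, hab, hca ▸ hbc⟩
      obtain ⟨a0, ha0⟩ := hSne
      obtain ⟨b0, hb0, hab0, _⟩ := htwo a0 ha0
      refine ⟨hS, ?_, ?_, htwo⟩
      · intro a ha
        obtain ⟨b, hb, hab, hba⟩ := htwo a ha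
        exact ⟨Function.LeftInverse.injective (g := b) (congrFun hba),
          Function.RightInverse.surjective (g := b) (congrFun hab)⟩
      · rw [← hab0]
        exact hS a0 ha0 b0 hb0
  · rintro (⟨-, -, -, hinv⟩ | ⟨hreg, hYu⟩)
    · -- S is a subgroup of Sym(Y)
      rintro f ⟨hMap, hres⟩
      obtain ⟨v, hv, hfv, hvf⟩ := hinv _ hres
      classical
      set g : X → X := fun z =>
        if h : z ∈ Y then (v ⟨z, h⟩ : X)
        else if h2 : ∃ x, f x = z then h2.choose else z with hgdef
      have hgMap : MapsTo g Y Y := by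
        intro z hz
        simp only [g, dif_pos hz]
        exact (v ⟨z, hz⟩).2
      have hgres : MapsTo.restrict g Y Y hgMap = v := by
        funext y
        apply Subtype.ext
        show g y = (v y : X)
        simp only [g, dif_pos y.2, Subtype.coe_eta]
      refine ⟨g, ⟨hgMap, by rw [hgres]; exact hv⟩, ?_⟩
      funext x
      show f (g (f x)) = f x
      by_cases h : f x ∈ Y
      · have h1 : g (f x) = (v ⟨f x, h⟩ : X) := by simp only [g, dif_pos h]
        have h2 : MapsTo.restrict f Y Y hMap (v ⟨f x, h⟩) = ⟨f x, h⟩ := congrFun hfv _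
        rw [h1]
        calc f (v ⟨f x, h⟩ : X)
            = (MapsTo.restrict f Y Y hMap (v ⟨f x, h⟩) : X) := rfl
          _ = f x := by rw [h2]
      · have hex : ∃ x', f x' = f x := ⟨x, rfl⟩
        have h1 : g (f x) = hex.choose := by
          simp only [g]
          rw [dif_neg h, dif_pos hex]
        rw [h1, hex.choose_spec]
    · -- S regular and Y = univ
      rintro f ⟨hMap, hres⟩
      obtain ⟨b, hb, hab⟩ := hreg _ hres
      have hmem : ∀ z : X, z ∈ Y := fun z => hYu.symm ▸ Set.mem_univ z
      set g : X → X := fun z => (b ⟨z, hmem z⟩ : X) with hgdef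
      have hgMap : MapsTo g Y Y := fun z hz => (b ⟨z, hmem z⟩).2
      have hgres : MapsTo.restrict g Y Y hgMap = b := by
        funext y
        apply Subtype.ext
        show g y = (b y : X)
        simp only [g, Subtype.coe_eta]
      refine ⟨g, ⟨hgMap, by rw [hgres]; exact hb⟩, ?_⟩
      funext x
      show f (g (f x)) = f x
      have key := congrFun hab ⟨x, hmem x⟩
      simp only [Function.comp_apply] at key
      have e1 : f (g (f x)) =
          (MapsTo.restrict f Y Y hMap
            (b (MapsTo.restrict f Y Y hMap ⟨x, hmem x⟩)) : X) := rfl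
      rw [e1, key]
      rfl
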